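/- Let p be a prime, let s ∈ GL(p,ℂ) be the permutation matrix of the p-cycle (1,2,…,p), and let G be a finite subgroup of GL(p,ℂ) all of whose elements are monomial matrices with all nonzero entries roots of unity, such that the permutation part φ(G) is exactly the cyclic group generated by the p-cycle (1,2,…,p). Then there exist a diagonal matrix d ∈ D(p,ℂ) and a scalar matrix z whose diagonal entry is a root of unity of p-power order, with z^p ∈ G ∩ D(p,ℂ), such that d⁻¹Gd is the subgroup generated by the single matrix s·z together with the diagonal subgroup G ∩ D(p,ℂ). -/

import Mathlib

open Fin.NatCast

def HasPermPart {m : Type*} [DecidableEq m] {F : Type*} [Field F]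
    (g : Matrix m m F) (σ : Equiv.Perm m) : Prop :=
  ∃ d : m → Fˣ, ∀ i j, g i j = if i = σ j then (d j : F) else 0

def IsMonomialRootsOfUnity {m : Type*} [DecidableEq m] {F : Type*} [Field F]
    (g : Matrix m m F) : Prop :=
  ∃ (σ : Equiv.Perm m) (d : m → Fˣ), (∀ j, IsOfFinOrder (d j)) ∧
    ∀ i j, g i j = if i = σ j then (d j : F) else 0

lemma hasPermPart_unique {m : Type*} [DecidableEq m] {F : Type*} [Field F]
    {g : Matrix m m F} {σ τ : Equiv.Perm m}
    (h1 : HasPermPart g σ) (h2 : HasPermPart g τ) : σ = τ := by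
  obtain ⟨d, hd⟩ := h1
  obtain ⟨e, he⟩ := h2
  ext j
  by_contra hne
  have h := (he (σ j) j).symm.trans (hd (σ j) j)
  rw [if_pos rfl, if_neg hne] at h
  exact (d j).ne_zero h.symm

lemma hasPermPart_mul {m : Type*} [Fintype m] [DecidableEq m] {F : Type*} [Field F]
    {a b : Matrix m m F} {σ τ : Equiv.Perm m}
    (ha : HasPermPart a σ) (hb : HasPermPart b τ) : HasPermPart (a * b) (σ * τ) := by
  obtain ⟨d, hd⟩ := ha
  obtain ⟨e, he⟩ := hb
  refine ⟨fun j => d (τ j) * e j, fun i j => ?_⟩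
  rw [Matrix.mul_apply]
  simp_rw [hd, he, ite_mul, zero_mul, mul_ite, mul_zero]
  rw [Finset.sum_eq_single (τ j) (fun x _ hx => by simp [hx]) (by simp)]
  simp [Equiv.Perm.mul_apply]
  congr

lemma hasPermPart_one {m : Type*} [DecidableEq m] {F : Type*} [Field F] :
    HasPermPart (1 : Matrix m m F) 1 :=
  ⟨fun _ => 1, fun i j => by simp [Matrix.one_apply]; congr⟩

lemma HasPermPart.isDiag {m : Type*} [DecidableEq m] {F : Type*} [Field F]
    {g : Matrix m m F} (h : HasPermPart g 1) : g.IsDiag := by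
  obtain ⟨d, hd⟩ := h
  intro i j hne
  rw [hd, if_neg (by simpa using hne)]

lemma hasPermPart_pow {m : Type*} [Fintype m] [DecidableEq m] {F : Type*} [Field F]
    {a : Matrix m m F} {σ : Equiv.Perm m} (ha : HasPermPart a σ) (k : ℕ) :
    HasPermPart (a ^ k) (σ ^ k) := by
  induction k with
  | zero => simpa using hasPermPart_one
  | succ k ih => rw [pow_succ, pow_succ]; exact hasPermPart_mul ih ha

/-- Let `s` be the permutation matrix of the `p`-cycle `(1,2,…,p)` and `G` a finite
subgroup of `GL(p,ℂ)` of monomial matrices with root-of-unity entries whose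
permutation part is exactly `⟨(1,2,…,p)⟩`.  Then `G` is conjugate by a diagonal
matrix `d` to the group generated by `s·z` and `G ∩ D(p,ℂ)`, where `z` is a scalar
matrix whose diagonal entry is a root of unity of `p`-power order and `z^p ∈ G ∩ D(p,ℂ)`. -/
theorem monomial_group_with_cyclic_permutation_part_normal_form
    {p : ℕ} (hp : p.Prime)
    (G : Subgroup (Matrix.GeneralLinearGroup (Fin p) ℂ)) (hfin : Finite G)
    (hmono : ∀ g ∈ G, IsMonomialRootsOfUnity (g : Matrix (Fin p) (Fin p) ℂ))
    (S : Matrix.GeneralLinearGroup (Fin p) ℂ)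
    (hS : ∀ i j : Fin p, (S : Matrix (Fin p) (Fin p) ℂ) i j =
      if i = finRotate p j then 1 else 0)
    (hperm : ∀ σ : Equiv.Perm (Fin p),
      (∃ g ∈ G, HasPermPart (g : Matrix (Fin p) (Fin p) ℂ) σ) ↔
      σ ∈ Subgroup.zpowers (finRotate p)) :
    ∃ d : Matrix.GeneralLinearGroup (Fin p) ℂ,
      Matrix.IsDiag (d : Matrix (Fin p) (Fin p) ℂ) ∧
      ∃ z : Matrix.GeneralLinearGroup (Fin p) ℂ,
        (∃ ζ : ℂˣ, (z : Matrix (Fin p) (Fin p) ℂ) = (ζ : ℂ) • (1 : Matrix (Fin p) (Fin p) ℂ) ∧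
          ∃ k : ℕ, ζ ^ (p ^ k) = 1) ∧
        z ^ p ∈ G ∧
        Matrix.IsDiag ((z ^ p : Matrix.GeneralLinearGroup (Fin p) ℂ) : Matrix (Fin p) (Fin p) ℂ) ∧
        (∀ x : Matrix.GeneralLinearGroup (Fin p) ℂ,
          d * x * d⁻¹ ∈ G ↔
          x ∈ Subgroup.closure ({S * z} ∪ {g : Matrix.GeneralLinearGroup (Fin p) ℂ |
            g ∈ G ∧ Matrix.IsDiag (g : Matrix (Fin p) (Fin p) ℂ)})) := by
  classical
  obtain ⟨n, rfl⟩ : ∃ n, p = n + 1 := ⟨p - 1, (Nat.succ_pred_eq_of_pos hp.pos).symm⟩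
  -- the permutation matrix group element with cycle part
  obtain ⟨g, hgG, hgPP⟩ := (hperm (finRotate (n+1))).mpr (Subgroup.mem_zpowers _)
  obtain ⟨e, hge⟩ := hgPP
  have hge' : ∀ i j, (g : Matrix (Fin (n+1)) (Fin (n+1)) ℂ) i j
      = if i = j + 1 then (e j : ℂ) else 0 := by
    intro i j; rw [hge i j, finRotate_succ_apply]
  -- orbit product
  have orbitProd : ∀ (f : Fin (n+1) → ℂˣ) (a : Fin (n+1)),
      ∏ k ∈ Finset.range (n+1), f (a + (k : Fin (n+1))) = ∏ k : Fin (n+1), f k := by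
    intro f a
    rw [← Fin.prod_univ_eq_prod_range (fun k => f (a + (k : Fin (n+1)))) (n+1)]
    simp only [Fin.cast_val_eq_self]
    exact Fintype.prod_equiv (Equiv.addLeft a) _ _ (fun k => rfl)
  set Δ : ℂˣ := ∏ j : Fin (n+1), e j with hΔdef
  -- powers of g
  have Apow : ∀ (k : ℕ) (i j : Fin (n+1)), ((g : Matrix (Fin (n+1)) (Fin (n+1)) ℂ) ^ k) i j =
      if i = j + (k : Fin (n+1)) then ((∏ t ∈ Finset.range k, e (j + (t : Fin (n+1))) : ℂˣ) : ℂ)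
      else 0 := by
    intro k
    induction k with
    | zero => intro i j; simp [Matrix.one_apply]
    | succ k ih =>
      intro i j
      rw [pow_succ', Matrix.mul_apply]
      simp_rw [ih, mul_ite, mul_zero]
      rw [Finset.sum_eq_single (j + (k : Fin (n+1))) (fun x _ hx => by simp [hx]) (by simp)]
      rw [if_pos rfl, hge']
      have hcast : j + ((k + 1 : ℕ) : Fin (n+1)) = (j + (k : Fin (n+1))) + 1 := by
        push_cast
        rw [add_assoc]
      rw [hcast, ite_mul, zero_mul]
      by_cases hcase : i = (j + (k : Fin (n+1))) + 1 <;>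
        simp [hcase, Finset.prod_range_succ, mul_comm]
  -- scalar embedding
  set sc : ℂˣ →* (Matrix (Fin (n+1)) (Fin (n+1)) ℂ)ˣ :=
    Units.map (Matrix.scalar (Fin (n+1))).toMonoidHom with hscdef
  have hscval : ∀ u : ℂˣ, ((sc u : (Matrix (Fin (n+1)) (Fin (n+1)) ℂ)ˣ) : Matrix (Fin (n+1)) (Fin (n+1)) ℂ)
      = Matrix.diagonal (fun _ => (u : ℂ)) := by
    intro u
    rw [hscdef]
    simp [Matrix.scalar_apply]
  have hgP : g ^ (n+1) = sc Δ := by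
    apply Units.ext
    rw [Units.val_pow_eq_pow_val, hscval]
    ext i j
    rw [Apow (n+1) i j, Matrix.diagonal_apply]
    rw [Fin.natCast_self, add_zero, orbitProd e j]
  -- Δ has finite order
  have heford : ∀ j, IsOfFinOrder (e j) := by
    obtain ⟨σ', d', hford, hd'⟩ := hmono g hgG
    have hσ' : σ' = finRotate (n+1) := hasPermPart_unique ⟨d', hd'⟩ ⟨e, hge⟩
    subst hσ'
    intro j
    have h1 := (hd' (finRotate (n+1) j) j).symm.trans (hge (finRotate (n+1) j) j)
    rw [if_pos rfl, if_pos rfl] at h1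
    have : d' j = e j := Units.ext h1
    rw [← this]; exact hford j
  have hΔford : IsOfFinOrder Δ := by
    have : Δ ∈ CommGroup.torsion ℂˣ :=
      Subgroup.prod_mem _ (fun j _ => (CommGroup.mem_torsion _).mpr (heford j))
    exact (CommGroup.mem_torsion _).mp this
  -- number theory: split the order of Δ
  set N : ℕ := orderOf Δ with hNdef
  have hN0 : N ≠ 0 := hΔford.orderOf_pos.ne'
  set a : ℕ := N.factorization (n+1) with hadef
  set m : ℕ := N / (n+1) ^ a with hmdef
  have hco : Nat.Coprime (n+1) m := Nat.coprime_ordCompl hp hN0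
  have hPam : (n+1) ^ a * m = N := Nat.ordProj_mul_ordCompl_eq_self N (n+1)
  set x : ℤ := Int.gcdA (n+1) m with hxdef
  set y : ℤ := Int.gcdB (n+1) m with hydef
  have hbez : (1 : ℤ) = (n+1) * x + m * y := by
    have hcst : ((n+1 : ℕ) : ℤ) = ((n : ℤ) + 1) := by push_cast; ring
    have h1 : Int.gcd ((n : ℤ) + 1) (m : ℤ) = 1 := by
      rw [← hcst, Int.gcd_natCast_natCast]; exact hco
    have h2 := Int.gcd_eq_gcd_ab ((n : ℤ) + 1) (m : ℤ)
    rw [h1] at h2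
    exact_mod_cast h2
  set Δp : ℂˣ := Δ ^ ((m : ℤ) * y) with hΔpdef
  set μ : ℂˣ := Δ ^ x with hμdef
  have hΔp_pow : Δp ^ ((n+1) ^ a) = 1 := by
    rw [hΔpdef, ← zpow_natCast, ← zpow_mul]
    have hexp : (m : ℤ) * y * (((n+1) ^ a : ℕ) : ℤ) = (N : ℤ) * y := by
      have : (((n+1) ^ a : ℕ) : ℤ) * (m : ℤ) = (N : ℤ) := by exact_mod_cast hPam
      linear_combination y * this
    rw [hexp, zpow_mul, zpow_natCast, pow_orderOf_eq_one, one_zpow]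
  -- a p-th root of Δp
  obtain ⟨ξ, hξ⟩ := IsAlgClosed.exists_pow_nat_eq (Δp : ℂ) (show 0 < (n+1) by omega)
  have hξ0 : ξ ≠ 0 := by
    intro h0
    rw [h0, zero_pow (by omega)] at hξ
    exact (Δp.ne_zero) hξ.symm
  set ζ : ℂˣ := Units.mk0 ξ hξ0 with hζdef
  have hζP : ζ ^ (n+1) = Δp := by
    apply Units.ext
    rw [Units.val_pow_eq_pow_val]
    simpa [hζdef] using hξ
  have hζfin : ζ ^ ((n+1) ^ (a + 1)) = 1 := by
    rw [pow_succ, mul_comm, pow_mul, hζP, hΔp_pow]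
  have hkey : ζ ^ (n+1) * μ ^ (n+1) = Δ := by
    rw [hζP, hΔpdef, hμdef, ← zpow_natCast (Δ ^ x), ← zpow_mul, ← zpow_add]
    have : (m : ℤ) * y + x * ((n+1) : ℕ) = 1 := by
      push_cast at hbez ⊢
      linarith
    rw [this, zpow_one]
  -- membership of scalars in G
  have hscΔG : sc Δ ∈ G := hgP ▸ pow_mem hgG (n+1)
  have hscμG : sc μ ∈ G := by
    rw [hμdef, map_zpow]
    exact Subgroup.zpow_mem G hscΔG x
  -- the twisted element h
  set h : Matrix.GeneralLinearGroup (Fin (n+1)) ℂ := g * (sc μ)⁻¹ with hhdef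
  have hhG : h ∈ G := mul_mem hgG (inv_mem hscμG)
  set e' : Fin (n+1) → ℂˣ := fun j => e j * μ⁻¹ with he'def
  have hh : ∀ i j, (h : Matrix (Fin (n+1)) (Fin (n+1)) ℂ) i j
      = if i = j + 1 then (e' j : ℂ) else 0 := by
    intro i j
    rw [hhdef]
    have hinv : (sc μ)⁻¹ = sc μ⁻¹ := (map_inv sc μ).symm
    rw [Units.val_mul, hinv, hscval, Matrix.mul_diagonal, hge', ite_mul, zero_mul]
    simp [he'def]
  have hprod' : ∏ j : Fin (n+1), e' j = ζ ^ (n+1) := by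
    rw [he'def]
    rw [Finset.prod_mul_distrib, Finset.prod_const, ← hΔdef, Finset.card_univ,
      Fintype.card_fin, inv_pow]
    rw [← hkey, mul_inv_cancel_right]
  -- the conjugating diagonal entries
  set T : ℕ → ℂˣ := fun b => (ζ ^ b)⁻¹ * ∏ k ∈ Finset.range b, e' ((k : Fin (n+1))) with hTdef
  have hTsucc : ∀ b : ℕ, T (b + 1) = T b * e' ((b : Fin (n+1))) * ζ⁻¹ := by
    intro b
    rw [hTdef]
    simp only []
    rw [Finset.prod_range_succ, pow_succ, mul_inv]
    ac_rfl
  have hTper : Function.Periodic T (n+1) := by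
    intro b
    rw [hTdef]
    simp only []
    rw [Finset.prod_range_add]
    have hcast : ∀ k : ℕ, (((b + k : ℕ)) : Fin (n+1)) = (b : Fin (n+1)) + (k : Fin (n+1)) := by
      intro k; push_cast; ring
    have horb : ∏ k ∈ Finset.range (n+1), e' (((b + k : ℕ) : Fin (n+1))) = ζ ^ (n+1) := by
      simp_rw [hcast]
      rw [orbitProd e' ((b : Fin (n+1))), hprod']
    rw [horb, pow_add, mul_inv,
      mul_comm (∏ k ∈ Finset.range b, e' ((k : Fin (n+1)))) (ζ ^ (n+1)),
      mul_assoc, inv_mul_cancel_left]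
  -- diagonal conjugator
  set t : Fin (n+1) → ℂˣ := fun j => T j.val with htdef
  have hrec : ∀ j : Fin (n+1), t (j + 1) = t j * e' j * ζ⁻¹ := by
    intro j
    have hv : (j + 1 : Fin (n+1)).val = (j.val + 1) % (n+1) := by
      rw [show (j + 1 : Fin (n+1)) = ((j.val + 1 : ℕ) : Fin (n+1)) by
        push_cast [Fin.cast_val_eq_self]; ring]
      rw [Fin.val_natCast]
    show T ((j + 1 : Fin (n+1)).val) = T j.val * e' j * ζ⁻¹
    rw [hv, hTper.map_mod_nat, hTsucc j.val, Fin.cast_val_eq_self]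
  set dm : Matrix (Fin (n+1)) (Fin (n+1)) ℂ :=
    Matrix.diagonal (fun i => (t i : ℂ)) with hdmdef
  set dmi : Matrix (Fin (n+1)) (Fin (n+1)) ℂ :=
    Matrix.diagonal (fun i => (((t i)⁻¹ : ℂˣ) : ℂ)) with hdmidef
  have hdd1 : dm * dmi = 1 := by
    rw [hdmdef, hdmidef, Matrix.diagonal_mul_diagonal]
    have hfun : (fun i => (t i : ℂ) * (((t i)⁻¹ : ℂˣ) : ℂ)) = fun _ : Fin (n+1) => (1:ℂ) :=
      funext fun i => Units.mul_inv (t i)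
    rw [hfun, Matrix.diagonal_one]
  have hdd2 : dmi * dm = 1 := by
    rw [hdmdef, hdmidef, Matrix.diagonal_mul_diagonal]
    have hfun : (fun i => (((t i)⁻¹ : ℂˣ) : ℂ) * (t i : ℂ)) = fun _ : Fin (n+1) => (1:ℂ) :=
      funext fun i => Units.inv_mul (t i)
    rw [hfun, Matrix.diagonal_one]
  set d : Matrix.GeneralLinearGroup (Fin (n+1)) ℂ := ⟨dm, dmi, hdd1, hdd2⟩ with hddef
  have hdval : (d : Matrix (Fin (n+1)) (Fin (n+1)) ℂ) = dm := rfl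
  have hdival : ((d⁻¹ : Matrix.GeneralLinearGroup (Fin (n+1)) ℂ) :
      Matrix (Fin (n+1)) (Fin (n+1)) ℂ) = dmi := rfl
  -- entries of S * sc ζ
  have hSz : ∀ i j, ((S * sc ζ : Matrix.GeneralLinearGroup (Fin (n+1)) ℂ) :
      Matrix (Fin (n+1)) (Fin (n+1)) ℂ) i j = if i = j + 1 then (ζ : ℂ) else 0 := by
    intro i j
    rw [Units.val_mul, hscval, Matrix.mul_diagonal, hS, finRotate_succ_apply,
      ite_mul, zero_mul, one_mul]
  -- the key conjugation identity
  have hu : ∀ j : Fin (n+1), t (j + 1) * ζ * (t j)⁻¹ = e' j := by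
    intro j
    rw [hrec j, inv_mul_cancel_right, mul_comm (t j) (e' j), mul_inv_cancel_right]
  have hconj : d * (S * sc ζ) * d⁻¹ = h := by
    apply Units.ext
    rw [Units.val_mul, Units.val_mul, hdval, hdival]
    ext i j
    rw [hdmdef, hdmidef, Matrix.mul_diagonal, Matrix.diagonal_mul, hSz i j, hh i j]
    by_cases hij : i = j + 1
    · subst hij
      rw [if_pos rfl, if_pos rfl]
      have := congrArg Units.val (hu j)
      simpa [mul_assoc] using this
    · simp [hij]
  -- conjugation by d fixes diagonal matrices
  have hdiagfix : ∀ w : Matrix.GeneralLinearGroup (Fin (n+1)) ℂ,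
      Matrix.IsDiag (w : Matrix (Fin (n+1)) (Fin (n+1)) ℂ) → d * w * d⁻¹ = w := by
    intro w hw
    have hcomm : (d : Matrix (Fin (n+1)) (Fin (n+1)) ℂ) * (w : Matrix (Fin (n+1)) (Fin (n+1)) ℂ)
        = (w : Matrix (Fin (n+1)) (Fin (n+1)) ℂ) * (d : Matrix (Fin (n+1)) (Fin (n+1)) ℂ) := by
      rw [hdval, ← hw.diagonal_diag, hdmdef, Matrix.diagonal_mul_diagonal,
        Matrix.diagonal_mul_diagonal]
      exact congrArg Matrix.diagonal (funext fun i =>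
        mul_comm ((t i : ℂ)) ((w : Matrix (Fin (n+1)) (Fin (n+1)) ℂ).diag i))
    have hdw : d * w = w * d := by
      apply Units.ext
      rw [Units.val_mul, Units.val_mul]
      exact hcomm
    rw [hdw, mul_inv_cancel_right]
  -- perm part of h
  have hPPh : HasPermPart (h : Matrix (Fin (n+1)) (Fin (n+1)) ℂ) (finRotate (n+1)) :=
    ⟨e', fun i j => by rw [hh i j, finRotate_succ_apply]⟩
  -- final assembly
  refine ⟨d, by rw [hdval, hdmdef]; exact Matrix.isDiag_diagonal _, sc ζ,
    ⟨ζ, by rw [hscval, Matrix.smul_one_eq_diagonal], a + 1, hζfin⟩, ?_, ?_, ?_⟩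
  · show (sc ζ) ^ (n+1) ∈ G
    rw [← map_pow, hζP, hΔpdef, map_zpow]
    exact Subgroup.zpow_mem G hscΔG _
  · show Matrix.IsDiag ((sc ζ ^ (n+1) : Matrix.GeneralLinearGroup (Fin (n+1)) ℂ) :
      Matrix (Fin (n+1)) (Fin (n+1)) ℂ)
    rw [← map_pow, hscval]
    exact Matrix.isDiag_diagonal _
  intro x
  constructor
  · -- d x d⁻¹ ∈ G → x ∈ closure
    intro hx
    obtain ⟨σ, dy, _, hdy⟩ := hmono (d * x * d⁻¹) hx
    have hσz : σ ∈ Subgroup.zpowers (finRotate (n+1)) :=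
      (hperm σ).mp ⟨d * x * d⁻¹, hx, dy, hdy⟩
    obtain ⟨k, hk⟩ := (Submonoid.mem_powers_iff _ _).mp (mem_powers_iff_mem_zpowers.mpr hσz)
    have hPPhk : HasPermPart ((h ^ k : Matrix.GeneralLinearGroup (Fin (n+1)) ℂ) :
        Matrix (Fin (n+1)) (Fin (n+1)) ℂ) ((finRotate (n+1)) ^ k) := by
      rw [Units.val_pow_eq_pow_val]
      exact hasPermPart_pow hPPh k
    obtain ⟨τ, dτ, _, hdτ⟩ := hmono ((h ^ k)⁻¹) (inv_mem (pow_mem hhG k))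
    have hval1 : ((h ^ k : Matrix.GeneralLinearGroup (Fin (n+1)) ℂ) :
          Matrix (Fin (n+1)) (Fin (n+1)) ℂ)
        * (((h ^ k)⁻¹ : Matrix.GeneralLinearGroup (Fin (n+1)) ℂ) :
          Matrix (Fin (n+1)) (Fin (n+1)) ℂ) = 1 := by
      rw [← Units.val_mul, mul_inv_cancel, Units.val_one]
    have hττ : (finRotate (n+1)) ^ k * τ = 1 :=
      hasPermPart_unique (hval1 ▸ hasPermPart_mul hPPhk ⟨dτ, hdτ⟩) hasPermPart_one
    have hτ : τ = ((finRotate (n+1)) ^ k)⁻¹ := (mul_eq_one_iff_inv_eq.mp hττ).symm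
    set w : Matrix.GeneralLinearGroup (Fin (n+1)) ℂ := (d * x * d⁻¹) * (h ^ k)⁻¹ with hwdef
    have hwG : w ∈ G := mul_mem hx (inv_mem (pow_mem hhG k))
    have hwPP : HasPermPart (w : Matrix (Fin (n+1)) (Fin (n+1)) ℂ) (σ * τ) := by
      rw [hwdef, Units.val_mul]
      exact hasPermPart_mul ⟨dy, hdy⟩ ⟨dτ, hdτ⟩
    have hστ : σ * τ = 1 := by rw [← hk, hτ, mul_inv_cancel]
    have hwD : Matrix.IsDiag (w : Matrix (Fin (n+1)) (Fin (n+1)) ℂ) :=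
      HasPermPart.isDiag (hστ ▸ hwPP)
    have hwK : w ∈ Subgroup.closure ({S * sc ζ} ∪
        {g' : Matrix.GeneralLinearGroup (Fin (n+1)) ℂ |
          g' ∈ G ∧ Matrix.IsDiag (g' : Matrix (Fin (n+1)) (Fin (n+1)) ℂ)}) :=
      Subgroup.subset_closure (Or.inr ⟨hwG, hwD⟩)
    have hSzK : S * sc ζ ∈ Subgroup.closure ({S * sc ζ} ∪
        {g' : Matrix.GeneralLinearGroup (Fin (n+1)) ℂ |
          g' ∈ G ∧ Matrix.IsDiag (g' : Matrix (Fin (n+1)) (Fin (n+1)) ℂ)}) :=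
      Subgroup.subset_closure (Or.inl rfl)
    have hc1 : d⁻¹ * w * d = w := by
      calc d⁻¹ * w * d = d⁻¹ * (d * w * d⁻¹) * d := by rw [hdiagfix w hwD]
        _ = w := by group
    have hc2 : d⁻¹ * h * d = S * sc ζ := by
      calc d⁻¹ * h * d = d⁻¹ * (d * (S * sc ζ) * d⁻¹) * d := by rw [hconj]
        _ = S * sc ζ := by group
    have hx2 : x = w * (S * sc ζ) ^ k := by
      have e1 : (S * sc ζ) ^ k = d⁻¹ * h ^ k * d := by
        rw [← hc2, show d⁻¹ * h * d = d⁻¹ * h * (d⁻¹)⁻¹ by rw [inv_inv], conj_pow, inv_inv]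
      rw [e1, ← hc1, hwdef]
      group
    rw [hx2]
    exact mul_mem hwK (pow_mem hSzK k)
  · -- x ∈ closure → d x d⁻¹ ∈ G
    intro hx
    have hle : Subgroup.closure ({S * sc ζ} ∪
        {g' : Matrix.GeneralLinearGroup (Fin (n+1)) ℂ |
          g' ∈ G ∧ Matrix.IsDiag (g' : Matrix (Fin (n+1)) (Fin (n+1)) ℂ)})
        ≤ Subgroup.comap (MulAut.conj d).toMonoidHom G := by
      rw [Subgroup.closure_le]
      rintro w (rfl | ⟨hwG, hwD⟩)
      · show (MulAut.conj d) (S * sc ζ) ∈ G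
        rw [MulAut.conj_apply, hconj]
        exact hhG
      · show (MulAut.conj d) w ∈ G
        rw [MulAut.conj_apply, hdiagfix w hwD]
        exact hwG
    have := hle hx
    rw [Subgroup.mem_comap] at this
    rw [show (MulAut.conj d).toMonoidHom x = d * x * d⁻¹ from MulAut.conj_apply d x] at this
    exact this
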